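/- Let n ≥ 1 and let the group ℤ act on V = {1, …, n} on the right by v · m = τ^m(v), where τ is the cyclic permutation sending k to k − 1 mod n (so τ(1) = n). A vector (a₁, …, aₙ) ∈ ℤ^n is invertible in the monoid ℤ^V with the twisted multiplication if and only if the residues of i − a_i modulo n, for i = 1, …, n, are pairwise distinct. -/

import Mathlib

/-- The twisted multiplication on maps `V → ℤ`, where `ℤ` acts on the right on `V`
via a permutation `τ` by `v · m = τ^m(v)`:
`(φ₂ * φ₁)(v) = φ₂(v) + φ₁(τ^{φ₂(v)}(v))`. -/
def twAdd {V : Type*} (τ : Equiv.Perm V) (φ₂ φ₁ : V → ℤ) : V → ℤ :=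
  fun v => φ₂ v + φ₁ ((τ ^ (φ₂ v)) v)

lemma cast_finRotate (n : ℕ) (w : Fin (n+1)) :
    ((finRotate (n+1) w : ℕ) : ZMod (n+1)) = ((w : ℕ) : ZMod (n+1)) + 1 := by
  rw [finRotate_succ_apply]
  have : ((w + 1 : Fin (n+1)) : ℕ) = ((w : ℕ) + 1) % (n+1) := by
    simp [Fin.val_add]
  rw [this, ZMod.natCast_mod]
  push_cast
  ring

lemma cast_finRotate_symm (n : ℕ) (v : Fin (n+1)) :
    (((finRotate (n+1)).symm v : ℕ) : ZMod (n+1)) = ((v : ℕ) : ZMod (n+1)) - 1 := by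
  have h := cast_finRotate n ((finRotate (n+1)).symm v)
  rw [Equiv.apply_symm_apply] at h
  rw [h]; ring

lemma cast_zpow (n : ℕ) (m : ℤ) (v : Fin (n+1)) :
    (((((finRotate (n+1)).symm ^ m) v : Fin (n+1)) : ℕ) : ZMod (n+1)) =
      ((v : ℕ) : ZMod (n+1)) - (m : ZMod (n+1)) := by
  induction m using Int.induction_on generalizing v with
  | zero => simp
  | succ k ih =>
    have : ((finRotate (n+1)).symm ^ ((k : ℤ) + 1)) v
        = ((finRotate (n+1)).symm ^ (k : ℤ)) ((finRotate (n+1)).symm v) := by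
      rw [zpow_add_one]; rfl
    rw [this, ih ((finRotate (n+1)).symm v), cast_finRotate_symm]
    push_cast
    ring
  | pred k ih =>
    have : ((finRotate (n+1)).symm ^ (-(k : ℤ) - 1)) v
        = ((finRotate (n+1)).symm ^ (-(k : ℤ))) (((finRotate (n+1)).symm)⁻¹ v) := by
      rw [zpow_sub_one]; rfl
    rw [this]
    have h2 : (((finRotate (n+1)).symm)⁻¹ v : Fin (n+1)) = finRotate (n+1) v := rfl
    rw [h2, ih (finRotate (n+1) v), cast_finRotate]
    push_cast
    ring

lemma cast_inj_fin (n : ℕ) (v w : Fin (n+1))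
    (h : ((v : ℕ) : ZMod (n+1)) = ((w : ℕ) : ZMod (n+1))) : v = w := by
  have := congrArg ZMod.val h
  rw [ZMod.val_cast_of_lt v.isLt, ZMod.val_cast_of_lt w.isLt] at this
  exact Fin.ext this

/-- For `V = {1, …, n}` (modelled as `Fin n`) with the right `ℤ`-action
`v · m = τ^m(v)`, where `τ` is the cyclic permutation `k ↦ k - 1 (mod n)`
(i.e. `(finRotate n).symm`), a vector `(a₁, …, aₙ) ∈ ℤ^n` is invertible in the
monoid `ℤ^V` with the twisted multiplication (whose identity is the zero vector)
if and only if the residues of `i - aᵢ` modulo `n` are pairwise distinct. -/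
theorem stmt_3 (n : ℕ) (hn : 1 ≤ n) (a : Fin n → ℤ) :
    (∃ ψ : Fin n → ℤ,
        twAdd (finRotate n).symm a ψ = (fun _ => 0) ∧
        twAdd (finRotate n).symm ψ a = (fun _ => 0)) ↔
      Function.Injective (fun i : Fin n => ((((i : ℕ) : ℤ) - a i : ℤ) : ZMod n)) := by
  obtain ⟨m, rfl⟩ : ∃ m, n = m + 1 := ⟨n - 1, by omega⟩
  set τ := (finRotate (m+1)).symm with hτ
  set F : Fin (m+1) → Fin (m+1) := fun v => (τ ^ (a v)) v with hFdef
  have hfun : ∀ i : Fin (m+1),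
      ((((i : ℕ) : ℤ) - a i : ℤ) : ZMod (m+1))
        = ((i : ℕ) : ZMod (m+1)) - ((a i : ℤ) : ZMod (m+1)) := by
    intro i; push_cast; ring
  have hF : ∀ v : Fin (m+1), ((F v : ℕ) : ZMod (m+1))
      = ((v : ℕ) : ZMod (m+1)) - ((a v : ℤ) : ZMod (m+1)) := fun v => cast_zpow m (a v) v
  constructor
  · rintro ⟨ψ, h1, h2⟩ i j hij
    simp only [hfun] at hij
    have h1' : ∀ v, a v + ψ (F v) = 0 := fun v => congrFun h1 v
    have hFij : F i = F j := by
      apply cast_inj_fin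
      rw [hF, hF, hij]
    have ha : a i = a j := by
      have := h1' i
      rw [hFij] at this
      linarith [h1' j]
    apply cast_inj_fin
    have : ((i : ℕ) : ZMod (m+1)) - ((a i : ℤ) : ZMod (m+1))
        = ((j : ℕ) : ZMod (m+1)) - ((a j : ℤ) : ZMod (m+1)) := hij
    rw [ha] at this
    linear_combination this
  · intro h
    have Finj : Function.Injective F := by
      intro v w hvw
      apply h
      have := congrArg (fun x : Fin (m+1) => ((x : ℕ) : ZMod (m+1))) hvw
      simp only [hF] at this
      simp only [hfun]
      exact this
    have Fbij : Function.Bijective F := (Finite.injective_iff_bijective).mp Finj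
    set E := Equiv.ofBijective F Fbij with hE
    refine ⟨fun v => - a (E.symm v), funext fun v => ?_, funext fun v => ?_⟩
    · show a v + - a (E.symm ((τ ^ (a v)) v)) = 0
      have : E.symm ((τ ^ (a v)) v) = v := E.symm_apply_apply v
      rw [this]; ring
    · show - a (E.symm v) + a ((τ ^ (- a (E.symm v))) v) = 0
      set w := E.symm v with hw
      have hFw : F w = v := E.apply_symm_apply v
      have : (τ ^ (- a w)) v = w := by
        rw [← hFw, zpow_neg]
        exact Equiv.symm_apply_apply _ _
      rw [this]; ring
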